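/- For every complex number q with |q| < 1, Σ_{m≥1} Σ_{n≥1} (−1)^{m−1} q^{2mn+m−1} / ((1+q^n)(1−q^{2m−1})) = Σ_{k≥2} ( q^{k−1}/(1+q^{2k−1}) ) Σ_{n=1}^{k−1} q^n/(1+q^n). -/

import Mathlib

open Function

private lemma qpow_le (q : ℂ) (hq : ‖q‖ < 1) {e : ℕ} (he : 1 ≤ e) : ‖q ^ e‖ ≤ ‖q‖ := by
  rw [norm_pow]
  calc ‖q‖ ^ e ≤ ‖q‖ ^ 1 := pow_le_pow_of_le_one (norm_nonneg q) hq.le he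
    _ = ‖q‖ := pow_one _

private lemma den_plus (q : ℂ) (hq : ‖q‖ < 1) {e : ℕ} (he : 1 ≤ e) :
    1 - ‖q‖ ≤ ‖1 + q ^ e‖ := by
  have h := norm_sub_norm_le (1 : ℂ) (-q ^ e)
  rw [sub_neg_eq_add, norm_one, norm_neg] at h
  have := qpow_le q hq he
  linarith

private lemma den_minus (q : ℂ) (hq : ‖q‖ < 1) {e : ℕ} (he : 1 ≤ e) :
    1 - ‖q‖ ≤ ‖1 - q ^ e‖ := by
  have h := norm_sub_norm_le (1 : ℂ) (q ^ e)
  rw [norm_one] at h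
  have := qpow_le q hq he
  linarith

private lemma den_plus_ne (q : ℂ) (hq : ‖q‖ < 1) {e : ℕ} (he : 1 ≤ e) :
    (1 + q ^ e) ≠ 0 := by
  have := den_plus q hq he
  intro h; rw [h, norm_zero] at this; linarith

private lemma den_minus_ne (q : ℂ) (hq : ‖q‖ < 1) {e : ℕ} (he : 1 ≤ e) :
    (1 - q ^ e) ≠ 0 := by
  have := den_minus q hq he
  intro h; rw [h, norm_zero] at this; linarith

private lemma geom1 (q : ℂ) (hq : ‖q‖ < 1) (A B : ℕ) (hA : 1 ≤ A) :
    ∑' m : ℕ, (-1:ℂ)^m * q^(m*A+B) = q^B/(1+q^A) := by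
  have hx : ‖-q^A‖ < 1 := by
    rw [norm_neg]; exact lt_of_le_of_lt (qpow_le q hq hA) hq
  have h1 : ∀ m : ℕ, (-1:ℂ)^m * q^(m*A+B) = (-q^A)^m * q^B := by
    intro m; rw [pow_add, pow_mul', neg_pow]; ring
  rw [tsum_congr h1, tsum_mul_right, tsum_geometric_of_norm_lt_one hx, sub_neg_eq_add,
    inv_mul_eq_div]

private lemma geom2 (q : ℂ) (hq : ‖q‖ < 1) (A : ℕ) (hA : 1 ≤ A) :
    ∑' j : ℕ, q^(A*j) = (1 - q^A)⁻¹ := by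
  have hx : ‖q^A‖ < 1 := lt_of_le_of_lt (qpow_le q hq hA) hq
  simp_rw [pow_mul]
  exact tsum_geometric_of_norm_lt_one hx

private lemma qb (q : ℂ) (hq : ‖q‖ < 1) {E a : ℕ} (hE : a ≤ E) {c : ℝ} (hc : 0 < c)
    {d : ℂ} (hd : c ≤ ‖d‖) : ‖q‖^E/‖d‖ ≤ (1/c) * ‖q‖^a := by
  have h1 : ‖q‖^E ≤ ‖q‖^a := pow_le_pow_of_le_one (norm_nonneg q) hq.le hE
  calc ‖q‖^E/‖d‖ ≤ ‖q‖^a/c := div_le_div₀ (pow_nonneg (norm_nonneg q) a) h1 hc hd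
    _ = (1/c) * ‖q‖^a := by ring

private lemma summable1 (f : ℕ → ℂ) {r : ℝ} (C : ℝ) (h0 : 0 ≤ r) (h1 : r < 1)
    (hb : ∀ n, ‖f n‖ ≤ C * r^n) : Summable f :=
  Summable.of_norm_bounded ((summable_geometric_of_lt_one h0 h1).mul_left C) hb

private lemma summable2 (f : ℕ×ℕ → ℂ) {r : ℝ} (C : ℝ) (h0 : 0 ≤ r) (h1 : r < 1)
    (hb : ∀ p : ℕ×ℕ, ‖f p‖ ≤ C * r^(p.1+p.2)) : Summable f := by
  refine Summable.of_norm_bounded ?_ hb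
  have h := ((summable_geometric_of_lt_one h0 h1).mul_of_nonneg
    (summable_geometric_of_lt_one h0 h1) (fun n => pow_nonneg h0 n)
    (fun n => pow_nonneg h0 n)).mul_left C
  exact h.congr (fun p => by rw [pow_add])

private lemma inner_step (q : ℂ) (hq : ‖q‖ < 1) (n : ℕ) :
    ∑' m : ℕ, (-1:ℂ)^m * q^(2*(m+1)*(n+1)+m) / ((1+q^(n+1))*(1-q^(2*m+1)))
    = ∑' j : ℕ, q^(2*n+j+2)/((1+q^(n+1))*(1+q^(2*n+2*j+3))) := by
  have hc : (0:ℝ) < 1 - ‖q‖ := by linarith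
  set G : ℕ → ℕ → ℂ := fun m j =>
    (-1:ℂ)^m * q^(2*(m+1)*(n+1)+m+(2*m+1)*j) / (1+q^(n+1)) with hG
  have hGnorm : ∀ m j, ‖G m j‖ = ‖q‖^(2*(m+1)*(n+1)+m+(2*m+1)*j) / ‖1+q^(n+1)‖ := by
    intro m j
    rw [hG]
    rw [norm_div, norm_mul, norm_pow, norm_neg, norm_one, one_pow, one_mul, norm_pow]
  have hGb : ∀ p : ℕ×ℕ, ‖uncurry G p‖ ≤ (1/(1-‖q‖)) * ‖q‖^(p.1+p.2) := by
    rintro ⟨m, j⟩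
    rw [show uncurry G (m,j) = G m j from rfl, hGnorm]
    exact qb q hq (by nlinarith) hc (den_plus q hq (by omega))
  have hsumG : Summable (uncurry G) := summable2 _ _ (norm_nonneg q) hq hGb
  have h1 : ∀ m, Summable (G m) := by
    intro m
    refine summable1 _ ((1/(1-‖q‖)) * ‖q‖^m) (norm_nonneg q) hq (fun j => ?_)
    rw [hGnorm, mul_assoc (1/(1-‖q‖)), ← pow_add]
    exact qb q hq (by nlinarith) hc (den_plus q hq (by omega))
  have h2 : ∀ j, Summable fun m => G m j := by
    intro j
    refine summable1 _ ((1/(1-‖q‖)) * ‖q‖^j) (norm_nonneg q) hq (fun m => ?_)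
    rw [hGnorm, mul_assoc (1/(1-‖q‖)), ← pow_add]
    exact qb q hq (by nlinarith) hc (den_plus q hq (by omega))
  have expand : ∀ m : ℕ, (-1:ℂ)^m * q^(2*(m+1)*(n+1)+m) / ((1+q^(n+1))*(1-q^(2*m+1)))
      = ∑' j, G m j := by
    intro m
    have hg2 := geom2 q hq (2*m+1) (by omega)
    calc (-1:ℂ)^m * q^(2*(m+1)*(n+1)+m) / ((1+q^(n+1))*(1-q^(2*m+1)))
        = ((-1:ℂ)^m * q^(2*(m+1)*(n+1)+m)/(1+q^(n+1))) * (1-q^(2*m+1))⁻¹ := by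
          rw [div_eq_mul_inv, div_eq_mul_inv, mul_inv]; ring
      _ = ((-1:ℂ)^m * q^(2*(m+1)*(n+1)+m)/(1+q^(n+1))) * ∑' j, q^((2*m+1)*j) := by
          rw [hg2]
      _ = ∑' j, G m j := by
          rw [← tsum_mul_left]
          exact tsum_congr fun j => by rw [hG]; simp only []; rw [pow_add]; ring
  rw [tsum_congr expand, ← hsumG.tsum_comm' h1 h2]
  refine tsum_congr fun j => ?_
  have hexp : ∀ m, G m j = (-1:ℂ)^m * q^(m*(2*n+2*j+3)+(2*n+j+2)) / (1+q^(n+1)) := by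
    intro m
    have he : 2*(m+1)*(n+1)+m+(2*m+1)*j = m*(2*n+2*j+3)+(2*n+j+2) := by ring
    simp only [hG]
    rw [he]
  calc ∑' m, G m j = ∑' m, (-1:ℂ)^m * q^(m*(2*n+2*j+3)+(2*n+j+2)) / (1+q^(n+1)) :=
        tsum_congr hexp
    _ = (∑' m, (-1:ℂ)^m * q^(m*(2*n+2*j+3)+(2*n+j+2))) / (1+q^(n+1)) := tsum_div_const
    _ = (q^(2*n+j+2)/(1+q^(2*n+2*j+3))) / (1+q^(n+1)) := by
        rw [geom1 q hq _ _ (by omega)]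
    _ = q^(2*n+j+2)/((1+q^(n+1))*(1+q^(2*n+2*j+3))) := by
        rw [div_div]; ring_nf

private lemma reindex_step (q : ℂ) (hq : ‖q‖ < 1) :
    ∑' n : ℕ, ∑' j : ℕ, q^(2*n+j+2)/((1+q^(n+1))*(1+q^(2*n+2*j+3)))
    = ∑' k : ℕ, q^(k+1)/(1+q^(2*k+3)) * ∑ i ∈ Finset.Icc 1 (k+1), q^i/(1+q^i) := by
  have hc : (0:ℝ) < 1 - ‖q‖ := by linarith
  set H : ℕ×ℕ → ℂ := fun p => q^(2*p.1+p.2+2)/((1+q^(p.1+1))*(1+q^(2*p.1+2*p.2+3))) with hH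
  set g : ℕ×ℕ → ℂ := fun p =>
    if p.2 ≤ p.1 then q^(p.1+p.2+2)/((1+q^(p.2+1))*(1+q^(2*p.1+3))) else 0 with hg
  have keybound : ∀ (E a b : ℕ), a + b ≤ E → ∀ e1 e2 : ℕ, 1 ≤ e1 → 1 ≤ e2 →
      ‖q^E/((1+q^e1)*(1+q^e2))‖ ≤ (1/((1-‖q‖)*(1-‖q‖))) * ‖q‖^(a+b) := by
    intro E a b hE e1 e2 he1 he2
    rw [norm_div, norm_pow, norm_mul]
    have hd : (1-‖q‖)*(1-‖q‖) ≤ ‖(1+q^e1)‖*‖(1+q^e2)‖ :=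
      mul_le_mul (den_plus q hq he1) (den_plus q hq he2) hc.le (norm_nonneg _)
    calc ‖q‖^E/(‖1+q^e1‖*‖1+q^e2‖)
        ≤ ‖q‖^(a+b)/((1-‖q‖)*(1-‖q‖)) := div_le_div₀ (pow_nonneg (norm_nonneg q) _)
            (pow_le_pow_of_le_one (norm_nonneg q) hq.le hE) (mul_pos hc hc) hd
      _ = _ := by ring
  have hHb : ∀ p : ℕ×ℕ, ‖H p‖ ≤ (1/((1-‖q‖)*(1-‖q‖))) * ‖q‖^(p.1+p.2) := by
    rintro ⟨n, j⟩
    simp only [hH]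
    exact keybound _ _ _ (by omega) _ _ (by omega) (by omega)
  have hsumH : Summable H := summable2 _ _ (norm_nonneg q) hq hHb
  have hφ : Function.Injective (fun p : ℕ×ℕ => ((p.1+p.2, p.1) : ℕ×ℕ)) := by
    rintro ⟨a,b⟩ ⟨c,d⟩ h
    simp only [Prod.mk.injEq] at h ⊢
    omega
  have hcomp : ∀ p : ℕ×ℕ, g (p.1+p.2, p.1) = H p := by
    rintro ⟨n, j⟩
    simp only [hg, hH]
    rw [if_pos (by omega : n ≤ n+j),
      show n+j+n+2 = 2*n+j+2 from by omega,
      show 2*(n+j)+3 = 2*n+2*j+3 from by omega]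
  have hsupp : Function.support g ⊆ Set.range (fun p : ℕ×ℕ => ((p.1+p.2, p.1):ℕ×ℕ)) := by
    rintro ⟨k, n⟩ hp
    by_cases hle : n ≤ k
    · refine ⟨(n, k-n), ?_⟩
      dsimp only
      rw [Nat.add_sub_cancel' hle]
    · exfalso; apply hp; simp only [hg]; exact if_neg hle
  have hvan : ∀ x ∉ Set.range (fun p : ℕ×ℕ => ((p.1+p.2, p.1):ℕ×ℕ)), g x = 0 := by
    intro x hx
    by_contra h
    exact hx (hsupp h)
  have hcompf : g ∘ (fun p : ℕ×ℕ => ((p.1+p.2, p.1):ℕ×ℕ)) = H := funext hcomp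
  have hsumg : Summable g := (hφ.summable_iff hvan).mp (hcompf ▸ hsumH)
  calc ∑' (n:ℕ) (j:ℕ), q^(2*n+j+2)/((1+q^(n+1))*(1+q^(2*n+2*j+3)))
      = ∑' p : ℕ×ℕ, H p := (hsumH.tsum_prod' hsumH.prod_factor).symm
    _ = ∑' p : ℕ×ℕ, g (p.1+p.2, p.1) := (tsum_congr hcomp).symm
    _ = ∑' p : ℕ×ℕ, g p := hφ.tsum_eq hsupp
    _ = ∑' (k:ℕ) (n:ℕ), g (k, n) := hsumg.tsum_prod' hsumg.prod_factor
    _ = ∑' k : ℕ, q^(k+1)/(1+q^(2*k+3)) * ∑ i ∈ Finset.Icc 1 (k+1), q^i/(1+q^i) := by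
      refine tsum_congr fun k => ?_
      have hfin : ∑' n, g (k, n) = ∑ n ∈ Finset.range (k+1), g (k, n) :=
        tsum_eq_sum (fun n hn => by
          have hnk : ¬ n ≤ k := by simpa [Nat.lt_succ_iff] using hn
          simp only [hg]; exact if_neg hnk)
      rw [hfin,
        show Finset.Icc 1 (k+1) = Finset.Ico 1 (k+2) from (Finset.Ico_add_one_right_eq_Icc 1 (k+1)).symm,
        Finset.sum_Ico_eq_sum_range,
        show k+2-1 = k+1 from rfl, Finset.mul_sum]
      refine Finset.sum_congr rfl fun n hn => ?_
      have hnk : n ≤ k := by simpa [Nat.lt_succ_iff] using hn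
      simp only [hg]
      rw [if_pos hnk, show (1:ℕ)+n = n+1 from Nat.add_comm 1 n]
      have h1 := den_plus_ne q hq (show 1 ≤ n+1 by omega)
      have h2 := den_plus_ne q hq (show 1 ≤ 2*k+3 by omega)
      field_simp
      ring

set_option maxHeartbeats 1000000 in
/-- `Σ_{m,n≥1} (−1)^{m−1} q^{2mn+m−1} / ((1+q^n)(1−q^{2m−1}))
      = Σ_{k≥2} ( q^{k−1}/(1+q^{2k−1}) ) Σ_{n=1}^{k−1} q^n/(1+q^n)`. -/
theorem ytilde_double_lambert (q : ℂ) (hq : ‖q‖ < 1) :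
    ∑' m : ℕ, ∑' n : ℕ,
        (-1 : ℂ) ^ m * q ^ (2 * (m + 1) * (n + 1) + (m + 1) - 1)
          / ((1 + q ^ (n + 1)) * (1 - q ^ (2 * (m + 1) - 1)))
    = ∑' k : ℕ,
        q ^ ((k + 2) - 1) / (1 + q ^ (2 * (k + 2) - 1))
          * ∑ n ∈ Finset.Icc 1 (k + 1), q ^ n / (1 + q ^ n) := by
  have hc : (0:ℝ) < 1 - ‖q‖ := by linarith
  have e1 : ∀ m n : ℕ, 2*(m+1)*(n+1)+(m+1)-1 = 2*(m+1)*(n+1)+m := fun m n => by omega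
  have e2 : ∀ m : ℕ, 2*(m+1)-1 = 2*m+1 := fun m => by omega
  have e3 : ∀ k : ℕ, (k+2)-1 = k+1 := fun k => by omega
  have e4 : ∀ k : ℕ, 2*(k+2)-1 = 2*k+3 := fun k => by omega
  simp only [e1, e2, e3, e4]
  have hbound : ∀ m n : ℕ, ‖(-1:ℂ)^m * q^(2*(m+1)*(n+1)+m)/((1+q^(n+1))*(1-q^(2*m+1)))‖
      ≤ (1/((1-‖q‖)*(1-‖q‖))) * ‖q‖^(m+n) := by
    intro m n
    rw [norm_div, norm_mul, norm_pow, norm_neg, norm_one, one_pow, one_mul, norm_pow, norm_mul]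
    have hd : (1-‖q‖)*(1-‖q‖) ≤ ‖(1+q^(n+1))‖*‖(1-q^(2*m+1))‖ :=
      mul_le_mul (den_plus q hq (by omega)) (den_minus q hq (by omega)) hc.le (norm_nonneg _)
    calc ‖q‖^(2*(m+1)*(n+1)+m)/(‖1+q^(n+1)‖*‖1-q^(2*m+1)‖)
        ≤ ‖q‖^(m+n)/((1-‖q‖)*(1-‖q‖)) := div_le_div₀ (pow_nonneg (norm_nonneg q) _)
            (pow_le_pow_of_le_one (norm_nonneg q) hq.le (by nlinarith)) (mul_pos hc hc) hd
      _ = _ := by ring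
  let T : ℕ → ℕ → ℂ := fun m n =>
    (-1:ℂ)^m * q^(2*(m+1)*(n+1)+m)/((1+q^(n+1))*(1-q^(2*m+1)))
  have hsumT : Summable (Function.uncurry T) :=
    summable2 _ (1/((1-‖q‖)*(1-‖q‖))) (norm_nonneg q) hq (fun p => hbound p.1 p.2)
  show ∑' (m:ℕ) (n:ℕ), T m n = _
  calc ∑' (m:ℕ) (n:ℕ), T m n
      = ∑' (n:ℕ) (m:ℕ), T m n :=
        (hsumT.tsum_comm' hsumT.prod_factor hsumT.prod_symm.prod_factor).symm
    _ = ∑' (n:ℕ) (j:ℕ), q^(2*n+j+2)/((1+q^(n+1))*(1+q^(2*n+2*j+3))) :=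
        tsum_congr fun n => inner_step q hq n
    _ = ∑' k : ℕ, q^(k+1)/(1+q^(2*k+3)) * ∑ i ∈ Finset.Icc 1 (k+1), q^i/(1+q^i) :=
        reindex_step q hq
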